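/- arXiv:1305.6541 — 2 statements merged into one kernel-verified Lean document; each statement's English description precedes it below -/
import Mathlib

section
/- Let T=1, p=2, β ≥ 1, η_t=(1−t)^β and γ ≡ 0, with initial value ξ=1. Then the infimum of J(x) = E[∫_0^1 (1−t)^β·|u_t|^2 dt] over all admissible controls x ∈ A_0(1) equals 0, yet there exists no admissible control x ∈ A_0(1) with J(x)=0; i.e. the value v=0 is not attained. -/
open MeasureTheory Set
open scoped ENNReal Classical

noncomputable section

/-- The cost functional `J(x) = E[∫_0^T (η_t |u_t|^p + γ_t |x_t|^p) dt]`, valued in `[0,∞]`,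
where `u` is the pathwise derivative of the control `x`. -/
def cost {Ω : Type*} [MeasurableSpace Ω] (P : Measure Ω) (T p : ℝ)
    (η γ : ℝ → Ω → ℝ) (x u : ℝ → Ω → ℝ) : ℝ≥0∞ :=
  ∫⁻ ω, (∫⁻ t in Set.Ioc (0 : ℝ) T,
    ENNReal.ofReal (η t ω * |u t ω| ^ p + γ t ω * |x t ω| ^ p)) ∂P

/-- `x` is a control with initial value `ξ` and (pathwise) derivative `u`:
`x` and `u` are progressively measurable, the paths of `x` are absolutely continuous with
`x_t = ξ + ∫_0^t u_s ds` on `[0,T]`. -/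
def IsControl {Ω : Type*} {m0 : MeasurableSpace Ω} (ℱ : Filtration ℝ m0)
    (T ξ : ℝ) (x u : ℝ → Ω → ℝ) : Prop :=
  ProgMeasurable ℱ u ∧ ProgMeasurable ℱ x ∧
  (∀ ω, IntegrableOn (fun s => u s ω) (Set.Icc 0 T)) ∧
  (∀ ω, ∀ t ∈ Set.Icc (0 : ℝ) T, x t ω = ξ + ∫ s in (0 : ℝ)..t, u s ω)

/-- An admissible control: a control with initial value `ξ` satisfying `x_T = 0` a.s. -/
def IsAdmissible {Ω : Type*} {m0 : MeasurableSpace Ω} (ℱ : Filtration ℝ m0)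
    (P : Measure Ω) (T ξ : ℝ) (x u : ℝ → Ω → ℝ) : Prop :=
  IsControl ℱ T ξ x u ∧ ∀ᵐ ω ∂P, x T ω = 0

/-! ### Auxiliary lemmas -/

lemma aux_measurable_rpow_const (r : ℝ) : Measurable fun x : ℝ => x ^ r :=
  measurable_of_continuousOn_compl_singleton 0 fun x hx =>
    (Real.continuousAt_rpow_const x r (Or.inl hx)).continuousWithinAt

lemma aux_progMeasurable_det {Ω : Type*} {m0 : MeasurableSpace Ω} (ℱ : Filtration ℝ m0)
    {f : ℝ → ℝ} (hf : Measurable f) : ProgMeasurable ℱ (fun t (_ : Ω) => f t) := by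
  intro i
  apply Measurable.stronglyMeasurable
  exact hf.comp (measurable_subtype_coe.comp measurable_fst)

lemma aux_integrableOn {r : ℝ} (hr : -1 < r) :
    IntegrableOn (fun t : ℝ => (1 - t) ^ r) (Ioc (0 : ℝ) 1) := by
  have h := (intervalIntegral.intervalIntegrable_rpow' (a := (0:ℝ)) (b := 1) hr).comp_sub_left 1
  norm_num at h
  have h2 := h.symm
  rwa [intervalIntegrable_iff_integrableOn_Ioc_of_le zero_le_one] at h2

lemma aux_integral {r : ℝ} (hr : -1 < r) :
    ∫ t in (0:ℝ)..1, (1 - t) ^ r = 1 / (r + 1) := by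
  have h := intervalIntegral.integral_comp_sub_left (a := (0:ℝ)) (b := 1)
    (fun x : ℝ => x ^ r) 1
  norm_num at h
  rw [h, integral_rpow (Or.inl hr), Real.one_rpow,
    Real.zero_rpow (by linarith : r + 1 ≠ 0)]
  norm_num

lemma aux_sq (a : ℝ) : |a| ^ (2:ℝ) = a ^ 2 := by
  rw [show (2:ℝ) = ((2:ℕ):ℝ) by norm_num, Real.rpow_natCast, sq_abs]

lemma aux_ae_ne_one : ∀ᵐ t : ℝ ∂(volume : Measure ℝ), t ≠ 1 := by
  rw [ae_iff]
  simp only [not_not, setOf_eq_eq_singleton]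
  exact Real.volume_singleton

/-- for `T = 1`, `p = 2`, `β ≥ 1`, `η_t = (1−t)^β`, `γ ≡ 0` and initial
value `ξ = 1`, the infimum of `J` over admissible controls equals `0`, but no admissible
control attains it. -/
theorem value_zero_not_attained
    {Ω : Type*} {m0 : MeasurableSpace Ω} (P : Measure Ω) [IsProbabilityMeasure P]
    (ℱ : Filtration ℝ m0) (β : ℝ) (hβ : 1 ≤ β) :
    sInf {c : ℝ≥0∞ | ∃ x u, IsAdmissible ℱ P 1 1 x u ∧
        c = cost P 1 2 (fun t _ => (1 - t) ^ β) (fun _ _ => 0) x u} = 0 ∧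
    ¬ ∃ x u, IsAdmissible ℱ P 1 1 x u ∧
        cost P 1 2 (fun t _ => (1 - t) ^ β) (fun _ _ => 0) x u = 0 := by
  constructor
  · -- the infimum is zero
    have key : ∀ ε : ℝ, 0 < ε →
        sInf {c : ℝ≥0∞ | ∃ x u, IsAdmissible ℱ P 1 1 x u ∧
          c = cost P 1 2 (fun t _ => (1 - t) ^ β) (fun _ _ => 0) x u} ≤ ENNReal.ofReal ε := by
      intro ε hε
      set x : ℝ → Ω → ℝ := fun t _ => (max (1 - t) 0) ^ ε with hx_def
      set u : ℝ → Ω → ℝ := fun s _ => -ε * (1 - s) ^ (ε - 1) with hu_def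
      have hεm1 : (-1 : ℝ) < ε - 1 := by linarith
      have hadm : IsAdmissible ℱ P 1 1 x u := by
        refine ⟨⟨?_, ?_, ?_, ?_⟩, ?_⟩
        · exact aux_progMeasurable_det ℱ
            (measurable_const.mul ((aux_measurable_rpow_const (ε - 1)).comp
              (measurable_const.sub measurable_id)))
        · exact aux_progMeasurable_det ℱ
            ((aux_measurable_rpow_const ε).comp
              ((measurable_const.sub measurable_id).max measurable_const))
        · intro ω
          rw [integrableOn_Icc_iff_integrableOn_Ioc]
          exact (aux_integrableOn hεm1).const_mul (-ε)
        · intro ω t ht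
          have hint : ∫ s in (0:ℝ)..t, (1 - s) ^ (ε - 1) = (1 - (1 - t) ^ ε) / ε := by
            have h := intervalIntegral.integral_comp_sub_left (a := (0:ℝ)) (b := t)
              (fun y : ℝ => y ^ (ε - 1)) 1
            norm_num at h
            rw [h, integral_rpow (Or.inl hεm1)]
            rw [show ε - 1 + 1 = ε by ring, Real.one_rpow]
          show (max (1 - t) 0) ^ ε = 1 + ∫ s in (0:ℝ)..t, -ε * (1 - s) ^ (ε - 1)
          rw [intervalIntegral.integral_const_mul, hint,
            max_eq_left (by linarith [ht.2] : (0:ℝ) ≤ 1 - t)]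
          field_simp
          ring
        · refine Filter.Eventually.of_forall fun ω => ?_
          show (max (1 - (1:ℝ)) 0) ^ ε = 0
          norm_num
          exact Real.zero_rpow hε.ne'
      have hmem : cost P 1 2 (fun t _ => (1 - t) ^ β) (fun _ _ => 0) x u ∈
          {c : ℝ≥0∞ | ∃ x u, IsAdmissible ℱ P 1 1 x u ∧
            c = cost P 1 2 (fun t _ => (1 - t) ^ β) (fun _ _ => 0) x u} :=
        ⟨x, u, hadm, rfl⟩
      refine le_trans (sInf_le hmem) ?_
      -- compute the cost
      have hr : (-1 : ℝ) < β + 2 * ε - 2 := by linarith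
      have hC : cost P 1 2 (fun t _ => (1 - t) ^ β) (fun _ _ => 0) x u =
          ∫⁻ t in Ioc (0:ℝ) 1,
            ENNReal.ofReal (ε ^ 2 * (1 - t) ^ (β + 2 * ε - 2)) := by
        unfold cost
        have hinner : ∀ ω : Ω, (∫⁻ t in Ioc (0:ℝ) 1,
            ENNReal.ofReal ((1 - t) ^ β * |u t ω| ^ (2:ℝ) + 0 * |x t ω| ^ (2:ℝ))) =
            ∫⁻ t in Ioc (0:ℝ) 1,
              ENNReal.ofReal (ε ^ 2 * (1 - t) ^ (β + 2 * ε - 2)) := by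
          intro ω
          refine lintegral_congr_ae ?_
          filter_upwards [ae_restrict_mem measurableSet_Ioc,
            ae_restrict_of_ae aux_ae_ne_one] with t ht ht1
          have ht' : t < 1 := lt_of_le_of_ne ht.2 ht1
          have hb : (0:ℝ) < 1 - t := by linarith
          congr 1
          rw [aux_sq, zero_mul, add_zero]
          show (1 - t) ^ β * (-ε * (1 - t) ^ (ε - 1)) ^ 2 = _
          have h1 : (-ε * (1 - t) ^ (ε - 1)) ^ 2 =
              ε ^ 2 * ((1 - t) ^ (ε - 1) * (1 - t) ^ (ε - 1)) := by ring
          rw [h1, ← Real.rpow_add hb, mul_left_comm, ← Real.rpow_add hb]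
          congr 1
          ring
        show (∫⁻ ω, (∫⁻ t in Set.Ioc (0:ℝ) 1,
            ENNReal.ofReal ((1-t)^β * |u t ω| ^ (2:ℝ) + 0 * |x t ω| ^ (2:ℝ))) ∂P) = _
        rw [lintegral_congr hinner, lintegral_const, measure_univ, mul_one]
      rw [hC]
      have hInt : Integrable (fun t : ℝ => ε ^ 2 * (1 - t) ^ (β + 2 * ε - 2))
          (volume.restrict (Ioc (0:ℝ) 1)) := (aux_integrableOn hr).const_mul (ε ^ 2)
      have hnn : 0 ≤ᵐ[volume.restrict (Ioc (0:ℝ) 1)]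
          fun t : ℝ => ε ^ 2 * (1 - t) ^ (β + 2 * ε - 2) := by
        filter_upwards [ae_restrict_mem measurableSet_Ioc] with t ht
        exact mul_nonneg (by positivity) (Real.rpow_nonneg (by linarith [ht.2]) _)
      rw [← ofReal_integral_eq_lintegral_ofReal hInt hnn]
      refine ENNReal.ofReal_le_ofReal ?_
      have hval : ∫ t in Ioc (0:ℝ) 1, ε ^ 2 * (1 - t) ^ (β + 2 * ε - 2) =
          ε ^ 2 * (1 / (β + 2 * ε - 1)) := by
        rw [← intervalIntegral.integral_of_le zero_le_one,
          intervalIntegral.integral_const_mul, aux_integral hr,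
          show β + 2 * ε - 2 + 1 = β + 2 * ε - 1 by ring]
      rw [hval]
      have hd : (0:ℝ) < β + 2 * ε - 1 := by linarith
      rw [mul_one_div, div_le_iff₀ hd]
      nlinarith
    refine le_antisymm ?_ zero_le
    refine ENNReal.le_of_forall_pos_le_add fun δ hδ _ => ?_
    rw [zero_add]
    calc sInf _ ≤ ENNReal.ofReal (δ:ℝ) := key δ (by exact_mod_cast hδ)
      _ = (δ : ℝ≥0∞) := ENNReal.ofReal_coe_nnreal
  · -- not attained
    rintro ⟨x, u, ⟨⟨hu_prog, hx_prog, hu_int, hode⟩, hxT⟩, hcost⟩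
    -- joint measurability of `u` up to time 1
    have h1 : StronglyMeasurable[Subtype.instMeasurableSpace.prod (ℱ 1)]
        (fun p : Set.Iic (1:ℝ) × Ω => u p.1 p.2) := hu_prog 1
    have hle : (Subtype.instMeasurableSpace.prod (ℱ 1) :
        MeasurableSpace (Set.Iic (1:ℝ) × Ω)) ≤ Subtype.instMeasurableSpace.prod m0 :=
      sup_le_sup le_rfl (MeasurableSpace.comap_mono (ℱ.le 1))
    have h2 : Measurable (fun p : Set.Iic (1:ℝ) × Ω => u p.1 p.2) :=
      (h1.mono hle).measurable
    have hφ : Measurable (fun q : Ω × ℝ =>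
        ((⟨min q.2 1, Set.mem_Iic.mpr (min_le_right _ _)⟩ : Set.Iic (1:ℝ)), q.1)) :=
      ((measurable_snd.min measurable_const).subtype_mk).prodMk measurable_fst
    have hU : Measurable (fun q : Ω × ℝ => u (min q.2 1) q.1) := h2.comp hφ
    have hG : Measurable (fun q : Ω × ℝ =>
        ENNReal.ofReal ((1 - q.2) ^ β * (u (min q.2 1) q.1) ^ 2)) :=
      ENNReal.measurable_ofReal.comp
        (((aux_measurable_rpow_const β).comp
          (measurable_const.sub measurable_snd)).mul (hU.pow_const 2))
    set F : Ω → ℝ≥0∞ := fun ω => ∫⁻ t in Ioc (0:ℝ) 1,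
      ENNReal.ofReal ((1 - t) ^ β * (u (min t 1) ω) ^ 2) with hF_def
    have hF : Measurable F := hG.lintegral_prod_right'
    have hcost' : cost P 1 2 (fun t _ => (1 - t) ^ β) (fun _ _ => 0) x u =
        ∫⁻ ω, F ω ∂P := by
      unfold cost
      refine lintegral_congr fun ω => ?_
      refine setLIntegral_congr_fun measurableSet_Ioc
        (fun t ht => ?_)
      rw [aux_sq, aux_sq, min_eq_left ht.2, zero_mul, add_zero]
    haveI : (MeasureTheory.ae P).NeBot := by
      refine ae_neBot.mpr ?_
      intro h
      have h2 : P univ = 1 := measure_univ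
      rw [h] at h2
      simp at h2
    have hFae : F =ᵐ[P] 0 := (lintegral_eq_zero_iff hF).mp (by rw [← hcost']; exact hcost)
    obtain ⟨ω0, hF0, hx0⟩ := (hFae.and hxT).exists
    have hF0' : (∫⁻ t in Ioc (0:ℝ) 1,
        ENNReal.ofReal ((1 - t) ^ β * (u (min t 1) ω0) ^ 2)) = 0 := hF0
    have hmeasω : AEMeasurable
        (fun t : ℝ => ENNReal.ofReal ((1 - t) ^ β * (u (min t 1) ω0) ^ 2))
        (volume.restrict (Ioc (0:ℝ) 1)) := by
      have h0 : AEMeasurable (fun t : ℝ => u t ω0) (volume.restrict (Ioc (0:ℝ) 1)) :=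
        ((hu_int ω0).aemeasurable).mono_measure
          (Measure.restrict_mono Ioc_subset_Icc_self le_rfl)
      have ha : AEMeasurable (fun t : ℝ => u (min t 1) ω0)
          (volume.restrict (Ioc (0:ℝ) 1)) := by
        refine h0.congr ?_
        filter_upwards [ae_restrict_mem measurableSet_Ioc] with t ht
        rw [min_eq_left ht.2]
      exact ENNReal.measurable_ofReal.comp_aemeasurable
        ((((aux_measurable_rpow_const β).comp
          (measurable_const.sub measurable_id)).aemeasurable).mul (ha.pow_const 2))
    have h0 := (lintegral_eq_zero_iff' hmeasω).mp hF0'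
    have huz : ∀ᵐ t ∂(volume.restrict (Ioc (0:ℝ) 1)), u t ω0 = 0 := by
      filter_upwards [h0, ae_restrict_mem measurableSet_Ioc,
        ae_restrict_of_ae aux_ae_ne_one] with t h0t ht ht1
      have ht' : t < 1 := lt_of_le_of_ne ht.2 ht1
      have hb : (0:ℝ) < 1 - t := by linarith
      have hpos := Real.rpow_pos_of_pos hb β
      rw [min_eq_left ht.2] at h0t
      have hle0 : (1 - t) ^ β * (u t ω0) ^ 2 ≤ 0 := by
        by_contra hp
        push_neg at hp
        exact (ENNReal.ofReal_pos.mpr hp).ne' h0t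
      have hsq0 : (u t ω0) ^ 2 = 0 := by nlinarith [sq_nonneg (u t ω0)]
      exact (pow_eq_zero_iff (by norm_num : (2:ℕ) ≠ 0)).mp hsq0
    have hint0 : ∫ s in (0:ℝ)..1, u s ω0 = 0 := by
      rw [intervalIntegral.integral_of_le zero_le_one]
      exact integral_eq_zero_of_ae (huz.mono fun t h => h)
    have hval := hode ω0 1 ⟨zero_le_one, le_rfl⟩
    rw [hint0, hx0] at hval
    norm_num at hval
end
end

section
/- Let μ ∈ ℝ with μ ≠ 0 and assume γ ≡ 0. Let η be a positive progressively measurable process satisfying E[η_t | F_s] = η_s·e^{μ(t−s)} a.s. for all 0≤s≤t≤T (as is the case for a geometric Brownian motion with drift μ), together with E[∫_0^T η_t^2 dt] < ∞, E[∫_0^T η_t^{1-q} dt] < ∞ and E[η_T^2] < ∞. Then for every initial value ξ ∈ ℝ the deterministic control x_t = ξ·(e^{−μ(q−1)t} − e^{−μ(q−1)T})/(1 − e^{−μ(q−1)T}) is admissible and optimal: J(x) ≤ J(y) for every admissible control y ∈ A_0(ξ). -/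
open MeasureTheory Set
open scoped ENNReal Classical

noncomputable section

-- ## Auxiliary lemmas
/-- Tangent-line inequality for `|·| ^ p`, `p > 1`. -/
lemma abs_rpow_tangent {p : ℝ} (hp : 1 < p) (z b : ℝ) :
    |z| ^ p + p * |z| ^ (p - 1) * ((if 0 ≤ z then (1 : ℝ) else -1) * (b - z)) ≤ |b| ^ p := by
  have hp0 : (0 : ℝ) < p := by linarith
  rcases eq_or_ne z 0 with rfl | hz
  · have h1 : |(0 : ℝ)| ^ p = 0 := by rw [abs_zero, Real.zero_rpow hp0.ne']
    have h2 : |(0 : ℝ)| ^ (p - 1) = 0 := by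
      rw [abs_zero, Real.zero_rpow (by intro h; exact absurd (by linarith : p = 1) (by linarith))]
    rw [h1, h2]
    simpa using Real.rpow_nonneg (abs_nonneg b) p
  · set s : ℝ := if 0 ≤ z then 1 else -1 with hs
    have hA : 0 < |z| := abs_pos.2 hz
    have hsa : s * z = |z| := by
      by_cases h : 0 ≤ z
      · rw [hs, if_pos h, one_mul, abs_of_nonneg h]
      · rw [hs, if_neg h, neg_one_mul, abs_of_neg (not_le.1 h)]
    have hsb : s * b ≤ |b| := by
      by_cases h : 0 ≤ z
      · rw [hs, if_pos h, one_mul]; exact le_abs_self b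
      · rw [hs, if_neg h, neg_one_mul]; exact neg_le_abs b
    have key : |z| ^ p + p * |z| ^ (p - 1) * (|b| - |z|) ≤ |b| ^ p := by
      have h0 : (0 : ℝ) ≤ |b| / |z| := by positivity
      have hBer := one_add_mul_self_le_rpow_one_add
        (by linarith : (-1 : ℝ) ≤ |b| / |z| - 1) hp.le
      have h1 : (1 : ℝ) + (|b| / |z| - 1) = |b| / |z| := by ring
      rw [h1, Real.div_rpow (abs_nonneg b) (abs_nonneg z)] at hBer
      have hAp : 0 < |z| ^ p := Real.rpow_pos_of_pos hA p
      have h3 : |z| ^ (p - 1) = |z| ^ p / |z| := Real.rpow_sub_one hA.ne' p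
      have h4 := mul_le_mul_of_nonneg_right hBer hAp.le
      rw [div_mul_cancel₀ _ hAp.ne'] at h4
      have h5 : (1 + p * (|b| / |z| - 1)) * |z| ^ p
          = |z| ^ p + p * (|z| ^ p / |z|) * (|b| - |z|) := by
        field_simp
      rw [h5] at h4
      rw [h3]
      exact h4
    have hnn : 0 ≤ p * |z| ^ (p - 1) :=
      mul_nonneg (by linarith) (Real.rpow_nonneg (abs_nonneg z) _)
    have h6 : s * (b - z) = s * b - |z| := by rw [mul_sub, hsa]
    have h7 : p * |z| ^ (p - 1) * (s * (b - z)) ≤ p * |z| ^ (p - 1) * (|b| - |z|) := by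
      refine mul_le_mul_of_nonneg_left ?_ hnn
      rw [h6]; linarith
    linarith

/-- A progressively measurable process, stopped at `T`, is jointly measurable. -/
lemma measurable_prog_min {Ω : Type*} {m0 : MeasurableSpace Ω} {ℱ : Filtration ℝ m0}
    {v : ℝ → Ω → ℝ} (hv : ProgMeasurable ℱ v) (T : ℝ) :
    Measurable fun st : ℝ × Ω => v (min st.1 T) st.2 := by
  have h : StronglyMeasurable[Subtype.instMeasurableSpace.prod (ℱ T)]
      fun p : Set.Iic T × Ω => v p.1 p.2 := hv T
  have hg : @Measurable (ℝ × Ω) (Set.Iic T × Ω) Prod.instMeasurableSpace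
      (Subtype.instMeasurableSpace.prod (ℱ T))
      (fun st => (⟨min st.1 T, Set.mem_Iic.2 (min_le_right _ _)⟩, st.2)) := by
    refine Measurable.prodMk ?_ ?_
    · exact (measurable_fst.min measurable_const).subtype_mk
    · exact measurable_snd.mono le_rfl (ℱ.le T)
  exact h.measurable.comp hg

/-- A deterministic continuous process is progressively measurable. -/
lemma progMeasurable_det {Ω : Type*} {m0 : MeasurableSpace Ω} (ℱ : Filtration ℝ m0)
    {f : ℝ → ℝ} (hf : Continuous f) : ProgMeasurable ℱ (fun t (_ : Ω) => f t) := by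
  intro i
  refine hf.stronglyMeasurable.comp_measurable ?_
  exact measurable_subtype_coe.comp measurable_fst

/-- `ℝ≥0∞`-weighted integrals of a nonnegative integrable function against an
`m`-measurable weight only see the conditional expectation. -/
lemma lintegral_mul_ofReal_condexp {Ω : Type*} {m m0 : MeasurableSpace Ω} (hm : m ≤ m0)
    (P : Measure Ω) [IsProbabilityMeasure P] {f : Ω → ℝ} (hfm : Measurable f)
    (hf : Integrable f P) (hf0 : 0 ≤ᵐ[P] f) {g : Ω → ℝ≥0∞} (hg : Measurable[m] g) :
    ∫⁻ ω, g ω * ENNReal.ofReal (f ω) ∂P = ∫⁻ ω, g ω * ENNReal.ofReal ((P[f|m]) ω) ∂P := by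
  have hgm0 : Measurable g := hg.mono hm le_rfl
  have hd1 : Measurable fun ω => ENNReal.ofReal (f ω) := hfm.ennreal_ofReal
  have hd2 : AEMeasurable (fun ω => ENNReal.ofReal ((P[f|m]) ω)) P :=
    ENNReal.measurable_ofReal.comp_aemeasurable
      integrable_condExp.aestronglyMeasurable.aemeasurable
  have e1 : ∫⁻ ω, g ω * ENNReal.ofReal (f ω) ∂P
      = ∫⁻ ω, g ω ∂(P.withDensity fun ω => ENNReal.ofReal (f ω)) := by
    rw [lintegral_withDensity_eq_lintegral_mul P hd1 hgm0]
    exact lintegral_congr fun ω => (mul_comm _ _)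
  have e2 : ∫⁻ ω, g ω * ENNReal.ofReal ((P[f|m]) ω) ∂P
      = ∫⁻ ω, g ω ∂(P.withDensity fun ω => ENNReal.ofReal ((P[f|m]) ω)) := by
    rw [lintegral_withDensity_eq_lintegral_mul₀' hd2 hgm0.aemeasurable]
    exact lintegral_congr fun ω => (mul_comm _ _)
  have htrim : (P.withDensity fun ω => ENNReal.ofReal (f ω)).trim hm
      = (P.withDensity fun ω => ENNReal.ofReal ((P[f|m]) ω)).trim hm := by
    refine @Measure.ext Ω m _ _ (fun sm hsm => ?_)
    rw [trim_measurableSet_eq hm hsm, trim_measurableSet_eq hm hsm,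
      withDensity_apply _ (hm _ hsm), withDensity_apply _ (hm _ hsm),
      ← ofReal_integral_eq_lintegral_ofReal hf.integrableOn (ae_restrict_of_ae hf0),
      ← ofReal_integral_eq_lintegral_ofReal integrable_condExp.integrableOn
        (ae_restrict_of_ae (condExp_nonneg hf0)),
      setIntegral_condExp hm hf hsm]
  rw [e1, e2, ← lintegral_trim hm hg, ← lintegral_trim hm hg, htrim]

/-- with `γ ≡ 0`, `μ ≠ 0` and `η` positive, progressively measurable with
`E[η_t | F_s] = η_s·e^{μ(t−s)}` (e.g. a geometric Brownian motion with drift `μ`) and the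
stated integrability conditions, for every `ξ ∈ ℝ` the deterministic control
`x_t = ξ·(e^{−μ(q−1)t} − e^{−μ(q−1)T})/(1 − e^{−μ(q−1)T})` is admissible and optimal. -/
theorem optimal_control_geometric_brownian_motion
    {Ω : Type*} {m0 : MeasurableSpace Ω} (P : Measure Ω) [IsProbabilityMeasure P]
    (ℱ : Filtration ℝ m0) (T p q : ℝ) (hT : 0 < T) (hp : 1 < p) (hq : q = p / (p - 1))
    (μ : ℝ) (hμ : μ ≠ 0)
    (η γ : ℝ → Ω → ℝ) (hηprog : ProgMeasurable ℱ η)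
    (hγ0 : ∀ t ω, γ t ω = 0)
    (hpos : ∀ t ω, 0 < η t ω)
    (hint : ∀ t, 0 ≤ t → t ≤ T → Integrable (η t) P)
    (hcond : ∀ s t, 0 ≤ s → s ≤ t → t ≤ T →
      P[η t | ℱ s] =ᵐ[P] fun ω => η s ω * Real.exp (μ * (t - s)))
    (hη2 : ∫⁻ ω, (∫⁻ t in Set.Ioc (0 : ℝ) T, ENNReal.ofReal ((η t ω) ^ 2)) ∂P < ⊤)
    (hηq : ∫⁻ ω, (∫⁻ t in Set.Ioc (0 : ℝ) T, ENNReal.ofReal (η t ω ^ (1 - q))) ∂P < ⊤)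
    (hηT : ∫⁻ ω, ENNReal.ofReal ((η T ω) ^ 2) ∂P < ⊤)
    (ξ : ℝ) (x u : ℝ → Ω → ℝ)
    (hxdef : ∀ t ω, x t ω =
      ξ * (Real.exp (-(μ * (q - 1) * t)) - Real.exp (-(μ * (q - 1) * T))) /
        (1 - Real.exp (-(μ * (q - 1) * T))))
    (hudef : ∀ t ω, u t ω =
      -(ξ * (μ * (q - 1)) * Real.exp (-(μ * (q - 1) * t)) /
        (1 - Real.exp (-(μ * (q - 1) * T))))) :
    IsAdmissible ℱ P T ξ x u ∧
    ∀ y w, IsAdmissible ℱ P T ξ y w → cost P T p η γ x u ≤ cost P T p η γ y w := by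
  -- basic constants
  have hp1 : (0:ℝ) < p - 1 := by linarith
  have hppos : (0:ℝ) < p := by linarith
  have hq1 : q - 1 = 1 / (p - 1) := by
    rw [hq, div_sub_one hp1.ne']
    rw [show p - (p - 1) = 1 by ring]
  have hq1pos : 0 < q - 1 := by rw [hq1]; positivity
  set a : ℝ := μ * (q - 1) with ha_def
  have ha : a ≠ 0 := mul_ne_zero hμ hq1pos.ne'
  have hap : a * (p - 1) = μ := by
    rw [ha_def, hq1]; field_simp
  have hD : 1 - Real.exp (-(a * T)) ≠ 0 := by
    intro hcontra
    have h1 : Real.exp (-(a * T)) = 1 := by linarith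
    rw [Real.exp_eq_one_iff, neg_eq_zero] at h1
    exact (mul_ne_zero ha hT.ne') h1
  set c : ℝ := -(ξ * a / (1 - Real.exp (-(a * T)))) with hc_def
  -- replace u and x by their deterministic formulas
  have huf : u = fun t (_ : Ω) => c * Real.exp (-(a * t)) := by
    funext t ω; rw [hudef t ω, hc_def]; ring
  have hxf : x = fun t (_ : Ω) =>
      ξ * (Real.exp (-(a * t)) - Real.exp (-(a * T))) / (1 - Real.exp (-(a * T))) := by
    funext t ω; rw [hxdef t ω]
  clear hudef hxdef
  subst huf hxf
  -- continuity facts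
  have hcu : Continuous fun t : ℝ => c * Real.exp (-(a * t)) := by fun_prop
  have hcx : Continuous fun t : ℝ =>
      ξ * (Real.exp (-(a * t)) - Real.exp (-(a * T))) / (1 - Real.exp (-(a * T))) := by
    fun_prop
  -- the elementary interval integral
  have hint_u : ∀ t : ℝ, ∫ s in (0:ℝ)..t, c * Real.exp (-(a * s))
      = (c / a) * (1 - Real.exp (-(a * t))) := by
    intro t
    have hder : ∀ s ∈ Set.uIcc (0:ℝ) t,
        HasDerivAt (fun r => -(c / a) * Real.exp (-(a * r))) (c * Real.exp (-(a * s))) s := by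
      intro s _
      have h1 : HasDerivAt (fun r : ℝ => -(a * r)) (-a) s := by
        simpa [neg_mul] using (hasDerivAt_id s).const_mul (-a)
      have h2 := h1.exp
      have h3 := h2.const_mul (-(c / a))
      refine h3.congr_deriv ?_
      field_simp
    rw [intervalIntegral.integral_eq_sub_of_hasDerivAt hder (hcu.intervalIntegrable 0 t)]
    rw [mul_zero, neg_zero, Real.exp_zero]
    ring
  -- admissibility
  have hadm : IsAdmissible ℱ P T ξ
      (fun t (_ : Ω) => ξ * (Real.exp (-(a * t)) - Real.exp (-(a * T)))
        / (1 - Real.exp (-(a * T))))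
      (fun t (_ : Ω) => c * Real.exp (-(a * t))) := by
    refine ⟨⟨progMeasurable_det ℱ hcu, progMeasurable_det ℱ hcx,
      fun ω => hcu.integrableOn_Icc, fun ω t _ => ?_⟩, ?_⟩
    · rw [hint_u t, hc_def]
      field_simp
      ring
    · refine Filter.Eventually.of_forall fun ω => ?_
      simp
  refine ⟨hadm, ?_⟩
  clear_value a c
  -- OPTIMALITY
  intro y w hyw
  obtain ⟨⟨hwprog, hyprog, hwpint, hydef⟩, hyT⟩ := hyw
  have hcost : ∀ z v : ℝ → Ω → ℝ, cost P T p η γ z v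
      = ∫⁻ ω, (∫⁻ t in Set.Ioc (0:ℝ) T, ENNReal.ofReal (η t ω * |v t ω| ^ p)) ∂P := by
    intro z v
    unfold cost
    simp_rw [hγ0, zero_mul, add_zero]
  simp only [hcost]
  -- trivial case: infinite cost
  rcases eq_top_or_lt_top
      (∫⁻ ω, (∫⁻ t in Set.Ioc (0:ℝ) T, ENNReal.ofReal (η t ω * |w t ω| ^ p)) ∂P) with htop | hfin
  · rw [htop]; exact le_top
  -- product measure setup
  set ν : Measure ℝ := volume.restrict (Set.Ioc (0:ℝ) T) with hν_def
  haveI hνfin : IsFiniteMeasure ν := by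
    constructor
    rw [hν_def, Measure.restrict_apply_univ]
    simp [Real.volume_Ioc]
  set ρ : Measure (ℝ × Ω) := ν.prod P with hρ_def
  have hmem : ∀ᵐ st ∂ρ, st.1 ∈ Set.Ioc (0:ℝ) T := by
    have h1 : ρ = ((volume : Measure ℝ).prod P).restrict (Set.Ioc (0:ℝ) T ×ˢ univ) := by
      rw [hρ_def, hν_def, ← Measure.prod_restrict, Measure.restrict_univ]
    rw [h1]
    filter_upwards [ae_restrict_mem (measurableSet_Ioc.prod MeasurableSet.univ)] with st hst
    exact hst.1
  -- generic swap identity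
  have swap_eq : ∀ F : ℝ × Ω → ℝ≥0∞, AEMeasurable F ρ →
      (∫⁻ ω, (∫⁻ t in Set.Ioc (0:ℝ) T, F (t, ω)) ∂P) = ∫⁻ st, F st ∂ρ := by
    intro F hF
    have hswap : AEMeasurable (Function.uncurry fun (ω : Ω) (t : ℝ) => F (t, ω)) (P.prod ν) := by
      have h2 : (Function.uncurry fun (ω : Ω) (t : ℝ) => F (t, ω)) = F ∘ Prod.swap := rfl
      rw [h2]
      exact hF.comp_quasiMeasurePreserving
        (Measure.measurePreserving_swap).quasiMeasurePreserving
    calc (∫⁻ ω, (∫⁻ t in Set.Ioc (0:ℝ) T, F (t, ω)) ∂P)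
        = ∫⁻ t, ∫⁻ ω, F (t, ω) ∂P ∂ν := lintegral_lintegral_swap hswap
      _ = ∫⁻ st, F st ∂ρ := (lintegral_prod F hF).symm
  -- joint measurability
  have hηjoint : Measurable fun st : ℝ × Ω => η (min st.1 T) st.2 :=
    measurable_prog_min hηprog T
  have hwjoint : Measurable fun st : ℝ × Ω => w (min st.1 T) st.2 :=
    measurable_prog_min hwprog T
  have hηTm : Measurable (η T) := ((IsStronglyProgressive.stronglyAdapted hηprog T).measurable).mono (ℱ.le T) le_rfl
  have hcum : Measurable fun st : ℝ × Ω => c * Real.exp (-(a * st.1)) := by fun_prop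
  have habsp : Measurable fun st : ℝ × Ω => |w (min st.1 T) st.2| ^ p :=
    (Real.continuous_rpow_const hppos.le).measurable.comp hwjoint.abs
  have hcump : Measurable fun st : ℝ × Ω => |c * Real.exp (-(a * st.1))| ^ p :=
    (Real.continuous_rpow_const hppos.le).measurable.comp hcum.abs
  -- the four basic functions on the product space
  set Wf : ℝ × Ω → ℝ := fun st => η st.1 st.2 * |w st.1 st.2| ^ p with hWf_def
  set U : ℝ × Ω → ℝ := fun st => η st.1 st.2 * |c * Real.exp (-(a * st.1))| ^ p with hU_def
  set G : ℝ × Ω → ℝ := fun st =>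
    η st.1 st.2 * Real.exp (-(μ * st.1)) * (w st.1 st.2 - c * Real.exp (-(a * st.1))) with hG_def
  set Hf : ℝ × Ω → ℝ := fun st =>
    η T st.2 * (w st.1 st.2 - c * Real.exp (-(a * st.1))) with hHf_def
  set Ev : ℝ × Ω → ℝ := fun st =>
    η st.1 st.2 * |w st.1 st.2 - c * Real.exp (-(a * st.1))| with hEv_def
  have hae_of : ∀ f g : ℝ × Ω → ℝ, (∀ st : ℝ × Ω, st.1 ∈ Set.Ioc (0:ℝ) T → f st = g st) →
      f =ᵐ[ρ] g := by
    intro f g h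
    filter_upwards [hmem] with st hst using h st hst
  have hηae : AEStronglyMeasurable (fun st : ℝ × Ω => η st.1 st.2) ρ :=
    hηjoint.aestronglyMeasurable.congr
      (hae_of _ _ fun st hst => by rw [min_eq_left hst.2])
  have hWae : AEStronglyMeasurable Wf ρ :=
    (hηjoint.mul habsp).aestronglyMeasurable.congr
      (hae_of _ _ fun st hst => by rw [hWf_def]; simp only [Pi.mul_apply]; rw [min_eq_left hst.2])
  have hUae : AEStronglyMeasurable U ρ :=
    (hηjoint.mul hcump).aestronglyMeasurable.congr
      (hae_of _ _ fun st hst => by rw [hU_def]; simp only [Pi.mul_apply]; rw [min_eq_left hst.2])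
  have hGae : AEStronglyMeasurable G ρ :=
    ((hηjoint.mul (by fun_prop : Measurable fun st : ℝ × Ω => Real.exp (-(μ * st.1)))).mul
      (hwjoint.sub hcum)).aestronglyMeasurable.congr
      (hae_of _ _ fun st hst => by rw [hG_def]; simp only [Pi.mul_apply, Pi.sub_apply]; rw [min_eq_left hst.2])
  have hHae : AEStronglyMeasurable Hf ρ :=
    ((hηTm.comp measurable_snd).mul (hwjoint.sub hcum)).aestronglyMeasurable.congr
      (hae_of _ _ fun st hst => by
        rw [hHf_def]; simp only [Function.comp_apply, Pi.mul_apply, Pi.sub_apply]; rw [min_eq_left hst.2])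
  have hEvae : AEStronglyMeasurable Ev ρ :=
    (hηjoint.mul (hwjoint.sub hcum).abs).aestronglyMeasurable.congr
      (hae_of _ _ fun st hst => by rw [hEv_def]; simp only [Pi.mul_apply, Pi.sub_apply]; rw [min_eq_left hst.2])
  -- nonnegativity
  have hW0 : ∀ st, 0 ≤ Wf st := fun st =>
    mul_nonneg (hpos _ _).le (Real.rpow_nonneg (abs_nonneg _) _)
  have hU0 : ∀ st, 0 ≤ U st := fun st =>
    mul_nonneg (hpos _ _).le (Real.rpow_nonneg (abs_nonneg _) _)
  have hEv0 : ∀ st, 0 ≤ Ev st := fun st => mul_nonneg (hpos _ _).le (abs_nonneg _)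
  -- cost identities
  have costy_eq : (∫⁻ ω, (∫⁻ t in Set.Ioc (0:ℝ) T, ENNReal.ofReal (η t ω * |w t ω| ^ p)) ∂P)
      = ∫⁻ st, ENNReal.ofReal (Wf st) ∂ρ := swap_eq _ hWae.aemeasurable.ennreal_ofReal
  have costx_eq : (∫⁻ ω, (∫⁻ t in Set.Ioc (0:ℝ) T,
        ENNReal.ofReal (η t ω * |c * Real.exp (-(a * t))| ^ p)) ∂P)
      = ∫⁻ st, ENNReal.ofReal (U st) ∂ρ := swap_eq _ hUae.aemeasurable.ennreal_ofReal
  -- integrability of W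
  have hWint : Integrable Wf ρ := by
    refine ⟨hWae, ?_⟩
    rw [hasFiniteIntegral_iff_ofReal (Filter.Eventually.of_forall hW0)]
    rw [← costy_eq]
    exact hfin
  -- integrability of η itself
  have hη2' : ∫⁻ st, ENNReal.ofReal ((η st.1 st.2) ^ 2) ∂ρ < ⊤ := by
    have hsq : AEMeasurable (fun st : ℝ × Ω => ENNReal.ofReal ((η st.1 st.2) ^ 2)) ρ := by
      have : (fun st : ℝ × Ω => ENNReal.ofReal ((η st.1 st.2) ^ 2))
          = fun st => ENNReal.ofReal (η st.1 st.2 * η st.1 st.2) := by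
        funext st; rw [sq]
      rw [this]
      exact (hηae.aemeasurable.mul hηae.aemeasurable).ennreal_ofReal
    rw [← swap_eq _ hsq]
    exact hη2
  have hηint : Integrable (fun st : ℝ × Ω => η st.1 st.2) ρ := by
    refine ⟨hηae, ?_⟩
    rw [hasFiniteIntegral_iff_ofReal
      (Filter.Eventually.of_forall fun st => (hpos _ _).le)]
    calc ∫⁻ st, ENNReal.ofReal (η st.1 st.2) ∂ρ
        ≤ ∫⁻ st, (1 + ENNReal.ofReal ((η st.1 st.2) ^ 2)) ∂ρ := by
          refine lintegral_mono fun st => ?_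
          have h1 : η st.1 st.2 ≤ 1 + (η st.1 st.2) ^ 2 := by nlinarith [sq_nonneg (η st.1 st.2 - 1)]
          calc ENNReal.ofReal (η st.1 st.2) ≤ ENNReal.ofReal (1 + (η st.1 st.2) ^ 2) :=
              ENNReal.ofReal_le_ofReal h1
            _ = 1 + ENNReal.ofReal ((η st.1 st.2) ^ 2) := by
              rw [ENNReal.ofReal_add (by norm_num) (sq_nonneg _), ENNReal.ofReal_one]
      _ = ρ univ + ∫⁻ st, ENNReal.ofReal ((η st.1 st.2) ^ 2) ∂ρ := by
          rw [lintegral_add_left measurable_const, lintegral_one]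
      _ < ⊤ := ENNReal.add_lt_top.2 ⟨measure_lt_top _ _, hη2'⟩
  -- uniform bound on the optimal control
  set M : ℝ := |c| * Real.exp (|a| * T) with hM_def
  have hM0 : 0 ≤ M := mul_nonneg (abs_nonneg c) (Real.exp_pos _).le
  clear_value M
  have huM : ∀ t : ℝ, t ∈ Set.Ioc (0:ℝ) T → |c * Real.exp (-(a * t))| ≤ M := by
    intro t ht
    rw [abs_mul, abs_of_pos (Real.exp_pos _), hM_def]
    refine mul_le_mul_of_nonneg_left ?_ (abs_nonneg c)
    refine Real.exp_le_exp.2 ?_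
    calc -(a * t) ≤ |a * t| := neg_le_abs _
      _ = |a| * t := by rw [abs_mul, abs_of_pos ht.1]
      _ ≤ |a| * T := mul_le_mul_of_nonneg_left ht.2 (abs_nonneg a)
  -- integrability of U
  have hUint : Integrable U ρ := by
    refine Integrable.mono' (hηint.const_mul (M ^ p)) hUae ?_
    filter_upwards [hmem] with st hst
    rw [Real.norm_eq_abs, abs_of_nonneg (hU0 st), hU_def]
    simp only
    calc η st.1 st.2 * |c * Real.exp (-(a * st.1))| ^ p
        ≤ η st.1 st.2 * M ^ p := mul_le_mul_of_nonneg_left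
          (Real.rpow_le_rpow (abs_nonneg _) (huM st.1 hst) hppos.le) (hpos _ _).le
      _ = M ^ p * η st.1 st.2 := mul_comm _ _
  -- |w| ≤ 1 + |w|^p
  have habs_le : ∀ st : ℝ × Ω, |w st.1 st.2| ≤ 1 + |w st.1 st.2| ^ p := by
    intro st
    rcases le_or_gt (|w st.1 st.2|) 1 with h | h
    · have := Real.rpow_nonneg (abs_nonneg (w st.1 st.2)) p
      linarith
    · have h3 : |w st.1 st.2| ≤ |w st.1 st.2| ^ p := by
        nth_rewrite 1 [← Real.rpow_one (|w st.1 st.2|)]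
        exact Real.rpow_le_rpow_of_exponent_le h.le hp.le
      linarith
  -- integrability of Ev (and of variants)
  have hEv_bound : ∀ᵐ st ∂ρ, ‖Ev st‖ ≤
      (η st.1 st.2 + Wf st) + M * η st.1 st.2 := by
    filter_upwards [hmem] with st hst
    rw [Real.norm_eq_abs, abs_of_nonneg (hEv0 st), hEv_def, hWf_def]
    simp only
    have hv : |w st.1 st.2 - c * Real.exp (-(a * st.1))| ≤ |w st.1 st.2| + M := by
      calc |w st.1 st.2 - c * Real.exp (-(a * st.1))|
          ≤ |w st.1 st.2| + |c * Real.exp (-(a * st.1))| := abs_sub _ _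
        _ ≤ |w st.1 st.2| + M := by linarith [huM st.1 hst]
    have hηnn := (hpos st.1 st.2).le
    nlinarith [mul_le_mul_of_nonneg_left hv hηnn,
      mul_le_mul_of_nonneg_left (habs_le st) hηnn]
  have hEvint : Integrable Ev ρ :=
    Integrable.mono' ((hηint.add hWint).add (hηint.const_mul M)) hEvae hEv_bound
  have hGint : Integrable G ρ := by
    refine Integrable.mono'
      (((hηint.add hWint).add (hηint.const_mul M)).const_mul (Real.exp (|μ| * T))) hGae ?_
    filter_upwards [hEv_bound, hmem] with st hst hstm
    rw [Real.norm_eq_abs, hG_def]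
    simp only
    rw [abs_mul, abs_mul, abs_of_nonneg (hpos st.1 st.2).le, abs_of_pos (Real.exp_pos _)]
    have hexp : Real.exp (-(μ * st.1)) ≤ Real.exp (|μ| * T) := by
      refine Real.exp_le_exp.2 ?_
      calc -(μ * st.1) ≤ |μ * st.1| := neg_le_abs _
        _ = |μ| * st.1 := by rw [abs_mul, abs_of_pos hstm.1]
        _ ≤ |μ| * T := mul_le_mul_of_nonneg_left hstm.2 (abs_nonneg μ)
    have h1 : η st.1 st.2 * Real.exp (-(μ * st.1)) * |w st.1 st.2 - c * Real.exp (-(a * st.1))|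
        ≤ Real.exp (|μ| * T) * (η st.1 st.2 * |w st.1 st.2 - c * Real.exp (-(a * st.1))|) := by
      have := mul_nonneg (hpos st.1 st.2).le (abs_nonneg (w st.1 st.2 - c * Real.exp (-(a * st.1))))
      nlinarith
    calc η st.1 st.2 * Real.exp (-(μ * st.1)) * |w st.1 st.2 - c * Real.exp (-(a * st.1))|
        ≤ Real.exp (|μ| * T) * (η st.1 st.2 * |w st.1 st.2 - c * Real.exp (-(a * st.1))|) := h1
      _ ≤ Real.exp (|μ| * T) * ((η st.1 st.2 + Wf st) + M * η st.1 st.2) := by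
          refine mul_le_mul_of_nonneg_left ?_ (Real.exp_pos _).le
          have := hst
          rw [Real.norm_eq_abs, abs_of_nonneg (hEv0 st), hEv_def] at this
          exact this
  -- the conditional-expectation lintegral identity, for every t in (0, T]
  have key_t : ∀ t : ℝ, t ∈ Set.Ioc (0:ℝ) T →
      (∫⁻ ω, ENNReal.ofReal (η T ω * |w t ω - c * Real.exp (-(a * t))|) ∂P)
      = ENNReal.ofReal (Real.exp (μ * (T - t))) *
          ∫⁻ ω, ENNReal.ofReal (η t ω * |w t ω - c * Real.exp (-(a * t))|) ∂P := by
    intro t ht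
    have hvtmeas : Measurable[ℱ t] fun ω => ENNReal.ofReal (|w t ω - c * Real.exp (-(a * t))|) := by
      have h0 : Measurable[ℱ t] (w t) := (IsStronglyProgressive.stronglyAdapted hwprog t).measurable
      have hg : Measurable fun r : ℝ => ENNReal.ofReal (|r - c * Real.exp (-(a * t))|) := by
        fun_prop
      exact hg.comp h0
    calc (∫⁻ ω, ENNReal.ofReal (η T ω * |w t ω - c * Real.exp (-(a * t))|) ∂P)
        = ∫⁻ ω, ENNReal.ofReal (|w t ω - c * Real.exp (-(a * t))|) * ENNReal.ofReal (η T ω) ∂P := by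
          refine lintegral_congr fun ω => ?_
          rw [ENNReal.ofReal_mul (hpos T ω).le, mul_comm]
      _ = ∫⁻ ω, ENNReal.ofReal (|w t ω - c * Real.exp (-(a * t))|)
            * ENNReal.ofReal ((P[η T|ℱ t]) ω) ∂P :=
          lintegral_mul_ofReal_condexp (ℱ.le t) P hηTm (hint T hT.le le_rfl)
            (Filter.Eventually.of_forall fun ω => (hpos T ω).le) hvtmeas
      _ = ∫⁻ ω, ENNReal.ofReal (|w t ω - c * Real.exp (-(a * t))|)
            * ENNReal.ofReal (η t ω * Real.exp (μ * (T - t))) ∂P := by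
          refine lintegral_congr_ae ?_
          filter_upwards [hcond t T ht.1.le ht.2 le_rfl] with ω hω
          rw [hω]
      _ = ENNReal.ofReal (Real.exp (μ * (T - t))) *
            ∫⁻ ω, ENNReal.ofReal (η t ω * |w t ω - c * Real.exp (-(a * t))|) ∂P := by
          rw [← lintegral_const_mul' _ _ ENNReal.ofReal_ne_top]
          refine lintegral_congr fun ω => ?_
          rw [ENNReal.ofReal_mul (hpos t ω).le, ENNReal.ofReal_mul (hpos t ω).le]
          ring
  -- integrability of Hf
  have hEvlt : ∫⁻ st, ENNReal.ofReal (Ev st) ∂ρ < ⊤ := by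
    rw [← ofReal_integral_eq_lintegral_ofReal hEvint (Filter.Eventually.of_forall hEv0)]
    exact ENNReal.ofReal_lt_top
  have hHofae : AEMeasurable (fun st : ℝ × Ω =>
      ENNReal.ofReal (η T st.2 * |w st.1 st.2 - c * Real.exp (-(a * st.1))|)) ρ := by
    refine (((hηTm.comp measurable_snd).mul
      (hwjoint.sub hcum).abs).aestronglyMeasurable.congr
      (hae_of _ _ fun st hst => by
        simp only [Function.comp_apply, Pi.mul_apply, Pi.sub_apply]; rw [min_eq_left hst.2])).aemeasurable.ennreal_ofReal
  have hEvofae : AEMeasurable (fun st => ENNReal.ofReal (Ev st)) ρ :=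
    hEvae.aemeasurable.ennreal_ofReal
  have hHlt : ∫⁻ st, ENNReal.ofReal (η T st.2 * |w st.1 st.2 - c * Real.exp (-(a * st.1))|) ∂ρ
      < ⊤ := by
    rw [lintegral_prod _ hHofae]
    calc ∫⁻ t, (∫⁻ ω, ENNReal.ofReal (η T ω * |w t ω - c * Real.exp (-(a * t))|) ∂P) ∂ν
        ≤ ∫⁻ t, ENNReal.ofReal (Real.exp (|μ| * T)) *
            (∫⁻ ω, ENNReal.ofReal (η t ω * |w t ω - c * Real.exp (-(a * t))|) ∂P) ∂ν := by
          refine lintegral_mono_ae ?_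
          have : ∀ᵐ t ∂ν, t ∈ Set.Ioc (0:ℝ) T := ae_restrict_mem measurableSet_Ioc
          filter_upwards [this] with t ht
          rw [key_t t ht]
          refine mul_le_mul_left (ENNReal.ofReal_le_ofReal (Real.exp_le_exp.2 ?_)) _
          calc μ * (T - t) ≤ |μ * (T - t)| := le_abs_self _
            _ = |μ| * |T - t| := abs_mul _ _
            _ = |μ| * (T - t) := by rw [abs_of_nonneg (by linarith [ht.2] : (0:ℝ) ≤ T - t)]
            _ ≤ |μ| * T := mul_le_mul_of_nonneg_left (by linarith [ht.1]) (abs_nonneg μ)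
      _ = ENNReal.ofReal (Real.exp (|μ| * T)) *
            ∫⁻ t, (∫⁻ ω, ENNReal.ofReal (η t ω * |w t ω - c * Real.exp (-(a * t))|) ∂P) ∂ν :=
          lintegral_const_mul' _ _ ENNReal.ofReal_ne_top
      _ = ENNReal.ofReal (Real.exp (|μ| * T)) * ∫⁻ st, ENNReal.ofReal (Ev st) ∂ρ := by
          rw [lintegral_prod _ hEvofae]
      _ < ⊤ := ENNReal.mul_lt_top ENNReal.ofReal_lt_top hEvlt
  have hHint : Integrable Hf ρ := by
    refine ⟨hHae, ?_⟩
    rw [hasFiniteIntegral_iff_norm]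
    calc ∫⁻ st, ENNReal.ofReal ‖Hf st‖ ∂ρ
        = ∫⁻ st, ENNReal.ofReal (η T st.2 * |w st.1 st.2 - c * Real.exp (-(a * st.1))|) ∂ρ := by
          refine lintegral_congr fun st => ?_
          rw [hHf_def]
          simp only
          rw [Real.norm_eq_abs, abs_mul, abs_of_nonneg (hpos T st.2).le]
      _ < ⊤ := hHlt
  -- the zero identity
  have hxT0 : ∀ ω : Ω, (ξ * (Real.exp (-(a * T)) - Real.exp (-(a * T)))
      / (1 - Real.exp (-(a * T)))) = 0 := by intro ω; simp
  have hZ : ∫ st, G st ∂ρ = 0 := by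
    have hGslice := hGint.prod_right_ae
    have hHslice := hHint.prod_right_ae
    have hmemt : ∀ᵐ t ∂ν, t ∈ Set.Ioc (0:ℝ) T := ae_restrict_mem measurableSet_Ioc
    have hptwise : ∀ᵐ t ∂ν, (∫ ω, G (t, ω) ∂P)
        = Real.exp (-(μ * T)) * ∫ ω, Hf (t, ω) ∂P := by
      filter_upwards [hGslice, hHslice, hmemt] with t hGt hHt ht
      have hvtm : StronglyMeasurable[ℱ t] fun ω => w t ω - c * Real.exp (-(a * t)) :=
        (IsStronglyProgressive.stronglyAdapted hwprog t).sub stronglyMeasurable_const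
      have hfg : Integrable (fun ω => (w t ω - c * Real.exp (-(a * t))) * η T ω) P := by
        refine (hHt.congr ?_)
        exact Filter.Eventually.of_forall fun ω => by rw [hHf_def]; simp only [mul_comm]
      have hmul := condExp_mul_of_stronglyMeasurable_left hvtm hfg (hint T hT.le le_rfl)
      have h1 : ∫ ω, (w t ω - c * Real.exp (-(a * t))) * η T ω ∂P
          = ∫ ω, (w t ω - c * Real.exp (-(a * t))) * (η t ω * Real.exp (μ * (T - t))) ∂P := by
        calc ∫ ω, (w t ω - c * Real.exp (-(a * t))) * η T ω ∂P
            = ∫ ω, ((fun ω => w t ω - c * Real.exp (-(a * t))) * η T) ω ∂P := rfl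
          _ = ∫ ω, (P[(fun ω => w t ω - c * Real.exp (-(a * t))) * η T|ℱ t]) ω ∂P :=
              (integral_condExp (ℱ.le t)).symm
          _ = ∫ ω, (w t ω - c * Real.exp (-(a * t))) * (η t ω * Real.exp (μ * (T - t))) ∂P := by
              refine integral_congr_ae ?_
              filter_upwards [hmul, hcond t T ht.1.le ht.2 le_rfl] with ω h1ω h2ω
              rw [h1ω]
              simp only [Pi.mul_apply]
              rw [h2ω]
      have hEt := Real.exp_pos (μ * (T - t))
      have h3 : (∫ ω, (w t ω - c * Real.exp (-(a * t))) * η t ω ∂P) * Real.exp (μ * (T - t))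
          = ∫ ω, (w t ω - c * Real.exp (-(a * t))) * η T ω ∂P := by
        rw [h1, ← integral_mul_const]
        refine integral_congr_ae (Filter.Eventually.of_forall fun ω => ?_)
        ring
      have hH' : ∫ ω, Hf (t, ω) ∂P
          = ∫ ω, (w t ω - c * Real.exp (-(a * t))) * η T ω ∂P := by
        refine integral_congr_ae (Filter.Eventually.of_forall fun ω => ?_)
        rw [hHf_def]; simp only; ring
      have hG' : ∫ ω, G (t, ω) ∂P
          = Real.exp (-(μ * t)) * ∫ ω, (w t ω - c * Real.exp (-(a * t))) * η t ω ∂P := by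
        rw [← integral_const_mul]
        refine integral_congr_ae (Filter.Eventually.of_forall fun ω => ?_)
        rw [hG_def]; simp only; ring
      have hexpeq : Real.exp (-(μ * T)) * Real.exp (μ * (T - t)) = Real.exp (-(μ * t)) := by
        rw [← Real.exp_add]
        congr 1
        ring
      rw [hG', hH', ← h3, ← hexpeq]
      ring
    have hswapH : (∫ t, (∫ ω, Hf (t, ω) ∂P) ∂ν) = ∫ ω, (∫ t, Hf (t, ω) ∂ν) ∂P :=
      integral_integral_swap (by exact hHint)
    have hinner : ∀ᵐ ω ∂P, (∫ t, Hf (t, ω) ∂ν) = 0 := by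
      filter_upwards [hyT] with ω hω
      have hwint' : IntegrableOn (fun s => w s ω) (Set.Ioc 0 T) :=
        (hwpint ω).mono_set Set.Ioc_subset_Icc_self
      have huint' : IntegrableOn (fun s : ℝ => c * Real.exp (-(a * s))) (Set.Ioc 0 T) :=
        (hcu.integrableOn_Icc).mono_set Set.Ioc_subset_Icc_self
      have h4 : (∫ t, Hf (t, ω) ∂ν)
          = η T ω * ∫ t in Set.Ioc (0:ℝ) T, (w t ω - c * Real.exp (-(a * t))) := by
        simp only [hHf_def]
        exact integral_const_mul _ _
      rw [h4, integral_sub hwint' huint']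
      have h5 : ∫ t in Set.Ioc (0:ℝ) T, w t ω = y T ω - ξ := by
        rw [← intervalIntegral.integral_of_le hT.le]
        have := hydef ω T ⟨hT.le, le_rfl⟩
        linarith
      have h6 : ∫ t in Set.Ioc (0:ℝ) T, c * Real.exp (-(a * t)) = -ξ := by
        rw [← intervalIntegral.integral_of_le hT.le, hint_u T, hc_def]
        field_simp
      rw [h5, h6, hω]
      ring
    calc ∫ st, G st ∂ρ = ∫ t, (∫ ω, G (t, ω) ∂P) ∂ν := integral_prod _ hGint
      _ = ∫ t, Real.exp (-(μ * T)) * ∫ ω, Hf (t, ω) ∂P ∂ν := integral_congr_ae hptwise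
      _ = Real.exp (-(μ * T)) * ∫ t, (∫ ω, Hf (t, ω) ∂P) ∂ν := integral_const_mul _ _
      _ = Real.exp (-(μ * T)) * ∫ ω, (∫ t, Hf (t, ω) ∂ν) ∂P := by rw [hswapH]
      _ = Real.exp (-(μ * T)) * ∫ ω, (0:ℝ) ∂P := by
          rw [integral_congr_ae hinner]
      _ = 0 := by simp
  -- pointwise convexity inequality
  set s : ℝ := if 0 ≤ c then 1 else -1 with hs_def
  set C : ℝ := p * |c| ^ (p - 1) * s with hC_def
  clear_value s C
  have hpt : ∀ st : ℝ × Ω, U st + C * G st ≤ Wf st := by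
    rintro ⟨t, ω⟩
    have htan := abs_rpow_tangent hp (c * Real.exp (-(a * t))) (w t ω)
    have hsign : (if 0 ≤ c * Real.exp (-(a * t)) then (1:ℝ) else -1) = s := by
      rw [hs_def]
      by_cases h : 0 ≤ c
      · rw [if_pos ((mul_nonneg_iff_of_pos_right (Real.exp_pos _)).2 h), if_pos h]
      · rw [if_neg (fun hcontra => h ((mul_nonneg_iff_of_pos_right (Real.exp_pos _)).1 hcontra)),
          if_neg h]
    rw [hsign] at htan
    have hpow : |c * Real.exp (-(a * t))| ^ (p - 1) = |c| ^ (p - 1) * Real.exp (-(μ * t)) := by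
      rw [abs_mul, abs_of_pos (Real.exp_pos _),
        Real.mul_rpow (abs_nonneg c) (Real.exp_pos _).le, ← Real.exp_mul]
      congr 2
      rw [show -(a * t) * (p - 1) = -(a * (p - 1) * t) from by ring, hap]
    have hηnn := (hpos t ω).le
    have hmul := mul_le_mul_of_nonneg_left htan hηnn
    calc U (t, ω) + C * G (t, ω)
        = η t ω * (|c * Real.exp (-(a * t))| ^ p
          + p * |c * Real.exp (-(a * t))| ^ (p - 1) * (s * (w t ω - c * Real.exp (-(a * t))))) := by
          rw [hU_def, hG_def, hC_def, hpow]
          simp only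
          ring
      _ ≤ η t ω * |w t ω| ^ p := hmul
      _ = Wf (t, ω) := by rw [hWf_def]
  -- final comparison
  have hsum_int : Integrable (fun st => U st + C * G st) ρ := hUint.add (hGint.const_mul C)
  have hmono := integral_mono hsum_int hWint hpt
  have hsplit : ∫ st, (U st + C * G st) ∂ρ = ∫ st, U st ∂ρ + C * ∫ st, G st ∂ρ := by
    rw [integral_add hUint (hGint.const_mul C), integral_const_mul]
  rw [hsplit, hZ, mul_zero, add_zero] at hmono
  rw [costx_eq, costy_eq,
    ← ofReal_integral_eq_lintegral_ofReal hUint (Filter.Eventually.of_forall hU0),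
    ← ofReal_integral_eq_lintegral_ofReal hWint (Filter.Eventually.of_forall hW0)]
  exact ENNReal.ofReal_le_ofReal hmono
end
end
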